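/- arXiv:2011.02545 — 4 statements merged into one kernel-verified Lean document; each statement's English description precedes it below -/
import Mathlib

section
/- Let H be a separable Hilbert space with orthonormal basis {e_j} and let W be the operator defined by W(e_j) = (1/2)e_{j+2} for j odd, W(e_j) = 2e_{j−2} for j even with j > 2, and W(e_2) = e_1. Then for each fixed k ∈ ℕ and all m ∈ ℕ, ‖W^{2k−1+m} P_{2k}‖ = 1/2^m, where P_n denotes the orthogonal projection onto span{e_1,…,e_n}. -/
set_option linter.unusedSectionVars false
set_option linter.unusedVariables false

open scoped InnerProductSpace
open Filter

noncomputable section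

variable {H : Type*} [NormedAddCommGroup H] [InnerProductSpace ℂ H] [CompleteSpace H]

/-- `m(F) := inf_{‖x‖=1} ‖F x‖`. -/
def mop (F : H →L[ℂ] H) : ℝ := ⨅ x : {x : H // ‖x‖ = 1}, ‖F x‖

/-- The orthogonal projection onto a finite-dimensional subspace, as an endomorphism of `H`. -/
def projCLM (K : Submodule ℂ H) (hK : FiniteDimensional ℂ K) : H →L[ℂ] H :=
  letI := hK
  letI : CompleteSpace K := FiniteDimensional.complete ℂ K
  K.subtypeL ∘L K.orthogonalProjection

/-- `L_m`, the span of the first `m` basis vectors. -/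
def Lspan (b : HilbertBasis ℕ ℂ H) (m : ℕ) : Submodule ℂ H :=
  Submodule.span ℂ (b '' Set.Iio m)

theorem Lspan_fd (b : HilbertBasis ℕ ℂ H) (m : ℕ) : FiniteDimensional ℂ (Lspan b m) :=
  FiniteDimensional.span_of_finite ℂ ((Set.finite_Iio m).image b)

/-- `P_m`, the orthogonal projection onto `L_m`. -/
def Pproj (b : HilbertBasis ℕ ℂ H) (m : ℕ) : H →L[ℂ] H := projCLM (Lspan b m) (Lspan_fd b m)

/-- `T_{U,W}^n (F) = W^n F U^n`. -/
def Tpow (W : H ≃L[ℂ] H) (U : H →L[ℂ] H) (n : ℕ) (F : H →L[ℂ] H) : H →L[ℂ] H :=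
  ((W : H →L[ℂ] H) ^ n) ∘L F ∘L (U ^ n)

/-- `S_{U,W}^n (F) = W^{-n} F U^{-n}` (here `U⁻¹ = star U` since `U` is unitary). -/
def Spow (W : H ≃L[ℂ] H) (U : H →L[ℂ] H) (n : ℕ) (F : H →L[ℂ] H) : H →L[ℂ] H :=
  ((W.symm : H →L[ℂ] H) ^ n) ∘L F ∘L ((star U) ^ n)

/-- The cosine operator function `C^{(n)} = (1/2)(T^n + S^n)`. -/
def Cpow (W : H ≃L[ℂ] H) (U : H →L[ℂ] H) (n : ℕ) (F : H →L[ℂ] H) : H →L[ℂ] H :=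
  (2 : ℂ)⁻¹ • (Tpow W U n F + Spow W U n F)

/-- `B₀(H)`, the compact operators on `H`, as a submodule of `B(H)`. -/
def B0 : Submodule ℂ (H →L[ℂ] H) := compactOperator (RingHom.id ℂ) H H

theorem Tpow_mem (W : H ≃L[ℂ] H) (U : H →L[ℂ] H) (n : ℕ) (F : H →L[ℂ] H)
    (hF : IsCompactOperator F) : Tpow W U n F ∈ B0 (H := H) :=
  (hF.comp_clm (U ^ n)).clm_comp ((W : H →L[ℂ] H) ^ n)

theorem Spow_mem (W : H ≃L[ℂ] H) (U : H →L[ℂ] H) (n : ℕ) (F : H →L[ℂ] H)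
    (hF : IsCompactOperator F) : Spow W U n F ∈ B0 (H := H) :=
  (hF.comp_clm ((star U) ^ n)).clm_comp ((W.symm : H →L[ℂ] H) ^ n)

theorem Cpow_mem (W : H ≃L[ℂ] H) (U : H →L[ℂ] H) (n : ℕ) (F : H →L[ℂ] H)
    (hF : IsCompactOperator F) : Cpow W U n F ∈ B0 (H := H) :=
  Submodule.smul_mem _ _ (Submodule.add_mem _ (Tpow_mem W U n F hF) (Spow_mem W U n F hF))

/-- `T^n` as a map of `B₀(H)`. -/
def TB0 (W : H ≃L[ℂ] H) (U : H →L[ℂ] H) (n : ℕ) (F : B0 (H := H)) : B0 (H := H) :=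
  ⟨Tpow W U n F.1, Tpow_mem W U n F.1 F.2⟩

/-- `C^{(n)}` as a map of `B₀(H)`. -/
def CB0 (W : H ≃L[ℂ] H) (U : H →L[ℂ] H) (n : ℕ) (F : B0 (H := H)) : B0 (H := H) :=
  ⟨Cpow W U n F.1, Cpow_mem W U n F.1 F.2⟩

/-- The absolute value `|G| = sqrt(G* G)` of an operator. -/
def absop (G : H →L[ℂ] H) : H →L[ℂ] H := CFC.sqrt (star G * G)

/-- The trace computed in the orthonormal basis `b`. -/
def trB (b : HilbertBasis ℕ ℂ H) (A : H →L[ℂ] H) : ℂ := ∑' j, ⟪b j, A (b j)⟫_ℂ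

/-- `G` is trace class (w.r.t. the basis `b`): the trace of `|G|` converges. -/
def IsTraceClassB (b : HilbertBasis ℕ ℂ H) (G : H →L[ℂ] H) : Prop :=
  Summable fun j => ⟪b j, absop G (b j)⟫_ℂ

/-- The trace norm `‖G‖₁ = tr |G|` computed in the basis `b`. -/
def traceNormB (b : HilbertBasis ℕ ℂ H) (G : H →L[ℂ] H) : ℝ :=
  ∑' j, (⟪b j, absop G (b j)⟫_ℂ).re

/-- `L_n` for a basis indexed by positive integers. -/
def LspanP (b : HilbertBasis ℕ+ ℂ H) (n : ℕ) : Submodule ℂ H :=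
  Submodule.span ℂ (b '' {j : ℕ+ | (j : ℕ) ≤ n})

theorem LspanP_fd (b : HilbertBasis ℕ+ ℂ H) (n : ℕ) : FiniteDimensional ℂ (LspanP b n) := by
  refine FiniteDimensional.span_of_finite ℂ (Set.Finite.image b ?_)
  have : {j : ℕ+ | (j : ℕ) ≤ n} = ((↑) : ℕ+ → ℕ) ⁻¹' Set.Iic n := rfl
  rw [this]
  exact (Set.finite_Iic n).preimage (Set.injOn_of_injective PNat.coe_injective)

/-- `P_n` for a basis indexed by positive integers. -/
def PprojP (b : HilbertBasis ℕ+ ℂ H) (n : ℕ) : H →L[ℂ] H := projCLM (LspanP b n) (LspanP_fd b n)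



def pnat (a : ℕ) (h : 0 < a) : ℕ+ := ⟨a, h⟩
@[simp] lemma pnat_coe (a : ℕ) (h : 0 < a) : ((pnat a h : ℕ+) : ℕ) = a := rfl
lemma pnat_inj {a a' : ℕ} {h : 0 < a} {h' : 0 < a'} (e : a = a') : pnat a h = pnat a' h' := by
  subst e; rfl

def tauF (n : ℕ) (j : ℕ+) : ℕ+ :=
  if Odd (j : ℕ) then pnat ((j:ℕ) + 2*n) (by positivity)
  else pnat (2*(n - (j:ℕ)/2) + 1) (by positivity)

noncomputable def cF (n : ℕ) (j : ℕ+) : ℂ :=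
  if Odd (j : ℕ) then ((2:ℂ)^n)⁻¹
  else (2:ℂ)^((j:ℕ)/2 - 1) * ((2:ℂ)^(n - (j:ℕ)/2))⁻¹

lemma tauF_injOn (n k : ℕ) (hk : 2*k ≤ n) :
    Set.InjOn (tauF n) {j : ℕ+ | (j:ℕ) ≤ 2*k} := by
  intro j hj j' hj' he
  simp only [Set.mem_setOf_eq] at hj hj'
  have h1 : 1 ≤ (j:ℕ) := j.property
  have h1' : 1 ≤ (j':ℕ) := j'.property
  have hcoe := congrArg (fun t : ℕ+ => (t:ℕ)) he
  apply PNat.coe_injective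
  by_cases ho : Odd (j:ℕ) <;> by_cases ho' : Odd (j':ℕ) <;>
    simp only [tauF, ho, ho', if_true, if_false, pnat_coe] at hcoe <;>
    rw [Nat.odd_iff] at * <;> omega

lemma cF_bound (k m : ℕ) (hk : 1 ≤ k) (hm : 1 ≤ m) (j : ℕ+) (hj : (j:ℕ) ≤ 2*k) :
    ‖cF (2*k-1+m) j‖ ≤ ((2:ℝ)^m)⁻¹ := by
  have h1 : 1 ≤ (j:ℕ) := j.property
  by_cases ho : Odd (j:ℕ)
  · rw [cF, if_pos ho, norm_inv, norm_pow, RCLike.norm_two]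
    exact inv_anti₀ (by positivity) (pow_le_pow_right₀ one_le_two (by omega))
  · rw [cF, if_neg ho, norm_mul, norm_inv, norm_pow, norm_pow, RCLike.norm_two]
    have hmod : (j:ℕ) % 2 = 0 := by rw [Nat.odd_iff] at ho; omega
    rw [← div_eq_mul_inv, ← one_div, div_le_div_iff₀ (by positivity) (by positivity),
      one_mul, ← pow_add]
    exact pow_le_pow_right₀ one_le_two (by omega)

lemma norm_sum_sq' {ι : Type*} {v : ι → H} (hv : Orthonormal ℂ v) (l : ι → ℂ) (s : Finset ι) :
    ‖∑ i ∈ s, l i • v i‖ ^ 2 = ∑ i ∈ s, ‖l i‖ ^ 2 := by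
  have h := hv.inner_sum l l s
  have h2 : (‖∑ i ∈ s, l i • v i‖ : ℝ) ^ 2 = Complex.re ⟪∑ i ∈ s, l i • v i, ∑ i ∈ s, l i • v i⟫_ℂ := by
    rw [← inner_self_eq_norm_sq (𝕜 := ℂ)]; rfl
  rw [h2, h, Complex.re_sum]
  refine Finset.sum_congr rfl fun i _ => ?_
  rw [mul_comm, Complex.mul_conj']
  norm_cast

lemma aux_odd (b : HilbertBasis ℕ+ ℂ H) (W : H ≃L[ℂ] H)
    (h1 : ∀ j : ℕ+, Odd (j : ℕ) → W (b j) = ((1 : ℂ) / 2) • b (j + 2)) :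
    ∀ (r : ℕ) (j : ℕ+), Odd (j : ℕ) →
      (W ^ r : H ≃L[ℂ] H) (b j) = ((2:ℂ)^r)⁻¹ • b (pnat ((j:ℕ) + 2*r) (by positivity)) := by
  intro r
  induction r with
  | zero =>
    intro j hj
    have hh : pnat ((j:ℕ) + 2*0) (by positivity) = j := by
      apply PNat.coe_injective; simp
    rw [hh]; simp; rfl
  | succ r ih =>
    intro j hj
    have hj2 : Odd ((j + 2 : ℕ+) : ℕ) := by
      simp only [PNat.add_coe]
      obtain ⟨t, ht⟩ := hj
      exact ⟨t + 1, by push_cast; omega⟩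
    rw [pow_succ]
    show (W ^ r : H ≃L[ℂ] H) (W (b j)) = _
    rw [h1 j hj, map_smul, ih _ hj2, smul_smul]
    congr 1
    · rw [pow_succ, mul_inv, one_div]; ring
    · congr 1
      apply PNat.coe_injective
      simp only [pnat_coe, PNat.add_coe]
      push_cast
      ring

lemma aux_even_descend (b : HilbertBasis ℕ+ ℂ H) (W : H ≃L[ℂ] H)
    (h2 : ∀ j : ℕ+, Even (j : ℕ) → 2 < j → W (b j) = (2 : ℂ) • b (j - 2))
    (h3 : W (b 2) = b 1) :
    ∀ i : ℕ, (W ^ (i+1) : H ≃L[ℂ] H) (b (pnat (2*(i+1)) (by positivity))) = (2:ℂ)^i • b 1 := by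
  intro i
  induction i with
  | zero =>
    have hh : pnat (2*(0+1)) (by positivity) = (2 : ℕ+) := by
      apply PNat.coe_injective; simp
    rw [hh, pow_one, h3]
    simp
  | succ i ih =>
    have heven : Even (((pnat (2*(i+1+1)) (by positivity)) : ℕ)) := ⟨i+2, by simp; ring⟩
    have hlt : (2 : ℕ+) < pnat (2*(i+1+1)) (by positivity) := by
      rw [← PNat.coe_lt_coe]; simp
    have hsub : pnat (2*(i+1+1)) (by positivity) - 2 = pnat (2*(i+1)) (by positivity) := by
      apply PNat.coe_injective
      rw [PNat.sub_coe, if_pos hlt]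
      simp only [pnat_coe]
      simp; omega
    rw [pow_succ]
    show (W ^ (i+1) : H ≃L[ℂ] H) (W (b _)) = _
    rw [h2 _ heven hlt, hsub, map_smul, ih, smul_smul]
    congr 1
    rw [pow_succ]; ring

lemma aux_even (b : HilbertBasis ℕ+ ℂ H) (W : H ≃L[ℂ] H)
    (h1 : ∀ j : ℕ+, Odd (j : ℕ) → W (b j) = ((1 : ℂ) / 2) • b (j + 2))
    (h2 : ∀ j : ℕ+, Even (j : ℕ) → 2 < j → W (b j) = (2 : ℂ) • b (j - 2))
    (h3 : W (b 2) = b 1) :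
    ∀ i n : ℕ, ∀ (hi : 1 ≤ i), i ≤ n →
      (W ^ n : H ≃L[ℂ] H) (b (pnat (2*i) (by omega))) =
        ((2:ℂ)^(i-1) * ((2:ℂ)^(n-i))⁻¹) • b (pnat (2*(n-i)+1) (by positivity)) := by
  intro i n hi hin
  obtain ⟨i', rfl⟩ : ∃ i', i = i' + 1 := ⟨i - 1, by omega⟩
  obtain ⟨r, rfl⟩ : ∃ r, n = r + (i' + 1) := ⟨n - (i'+1), by omega⟩
  rw [pow_add]
  show (W ^ r : H ≃L[ℂ] H) ((W ^ (i'+1) : H ≃L[ℂ] H) (b _)) = _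
  rw [aux_even_descend b W h2 h3 i', map_smul,
    aux_odd b W h1 r 1 odd_one, smul_smul]
  simp only [Nat.add_sub_cancel, Nat.succ_sub_one]
  congr 1
  exact congrArg b (pnat_inj (by simp; omega))

lemma aux_pointwise (b : HilbertBasis ℕ+ ℂ H) (W : H ≃L[ℂ] H)
    (h1 : ∀ j : ℕ+, Odd (j : ℕ) → W (b j) = ((1 : ℂ) / 2) • b (j + 2))
    (h2 : ∀ j : ℕ+, Even (j : ℕ) → 2 < j → W (b j) = (2 : ℂ) • b (j - 2))
    (h3 : W (b 2) = b 1) (n : ℕ) (j : ℕ+) (hjn : (j:ℕ) ≤ n) :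
    (W ^ n : H ≃L[ℂ] H) (b j) = cF n j • b (tauF n j) := by
  by_cases ho : Odd (j:ℕ)
  · rw [aux_odd b W h1 n j ho]
    simp only [cF, tauF, if_pos ho]
  · have h1j : 1 ≤ (j:ℕ) := j.property
    have hmod : (j:ℕ) % 2 = 0 := by rw [Nat.odd_iff] at ho; omega
    have hj2 : j = pnat (2 * ((j:ℕ)/2)) (by omega) := by
      apply PNat.coe_injective; simp; omega
    rw [hj2, aux_even b W h1 h2 h3 ((j:ℕ)/2) n (by omega) (by omega)]
    have ho2 : ¬ Odd (2 * ((j:ℕ)/2)) := by simp [Nat.odd_iff]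
    simp only [cF, tauF, pnat_coe, if_neg ho2,
      Nat.mul_div_cancel_left _ (by norm_num : 0 < 2)]

lemma aux_spanbound (b : HilbertBasis ℕ+ ℂ H) (W : H ≃L[ℂ] H)
    (h1 : ∀ j : ℕ+, Odd (j : ℕ) → W (b j) = ((1 : ℂ) / 2) • b (j + 2))
    (h2 : ∀ j : ℕ+, Even (j : ℕ) → 2 < j → W (b j) = (2 : ℂ) • b (j - 2))
    (h3 : W (b 2) = b 1) (k m : ℕ) (hk : 1 ≤ k) (hm : 1 ≤ m) (y : H)
    (hy : y ∈ LspanP b (2*k)) :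
    ‖(W ^ (2*k-1+m) : H ≃L[ℂ] H) y‖ ≤ ((2:ℝ)^m)⁻¹ * ‖y‖ := by
  classical
  set n := 2*k-1+m with hn
  have hkn : 2*k ≤ n := by omega
  set Sf : Finset ℕ+ := (Finset.range (2*k)).image (fun t => pnat (t+1) t.succ_pos) with hSf
  have hSfmem : ∀ j : ℕ+, j ∈ Sf ↔ (j:ℕ) ≤ 2*k := by
    intro j
    constructor
    · rintro hj
      rw [hSf, Finset.mem_image] at hj
      obtain ⟨t, ht, rfl⟩ := hj
      rw [Finset.mem_range] at ht
      simp; omega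
    · intro h
      rw [hSf, Finset.mem_image]
      refine ⟨(j:ℕ)-1, by rw [Finset.mem_range]; have := j.property; omega, ?_⟩
      apply PNat.coe_injective
      exact Nat.succ_pred_eq_of_pos j.property
  have hset : b '' {j : ℕ+ | (j:ℕ) ≤ 2*k} = ↑(Sf.image b) := by
    rw [Finset.coe_image]
    congr 1
    ext j
    simp [hSfmem]
  rw [LspanP, hset] at hy
  obtain ⟨f, -, hf⟩ := Submodule.mem_span_finset.mp hy
  have hinj : Function.Injective b := b.orthonormal.linearIndependent.injective
  have hy' : y = ∑ j ∈ Sf, f (b j) • b j := by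
    rw [← hf, Finset.sum_image (fun a _ a' _ h => hinj h)]
  set g : ℕ+ → ℂ := fun j => f (b j) with hg
  have hWy : (W ^ n : H ≃L[ℂ] H) y = ∑ j ∈ Sf, (g j * cF n j) • b (tauF n j) := by
    rw [hy', map_sum]
    refine Finset.sum_congr rfl fun j hj => ?_
    rw [map_smul, aux_pointwise b W h1 h2 h3 n j (le_trans ((hSfmem j).mp hj) hkn), smul_smul]
  have hny : ‖y‖^2 = ∑ j ∈ Sf, ‖g j‖^2 := by
    rw [hy']; exact norm_sum_sq' b.orthonormal g Sf
  have hτ : Set.InjOn (tauF n) {j : ℕ+ | (j:ℕ) ≤ 2*k} := tauF_injOn n k hkn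
  have honb : Orthonormal ℂ (fun j : {x // x ∈ Sf} => b (tauF n j.1)) :=
    b.orthonormal.comp (fun j : {x // x ∈ Sf} => tauF n j.1)
      (fun a a' hh => Subtype.ext (hτ ((hSfmem _).mp a.2) ((hSfmem _).mp a'.2) hh))
  have hnW : ‖(W ^ n : H ≃L[ℂ] H) y‖^2 = ∑ j ∈ Sf, ‖g j * cF n j‖^2 := by
    rw [hWy, ← Finset.sum_attach Sf (fun j => (g j * cF n j) • b (tauF n j)),
      norm_sum_sq' honb (fun j => g j.1 * cF n j.1) Sf.attach]
    exact Finset.sum_attach Sf (fun j => ‖g j * cF n j‖^2)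
  have hbound : ∑ j ∈ Sf, ‖g j * cF n j‖^2 ≤ ∑ j ∈ Sf, (((2:ℝ)^m)⁻¹)^2 * ‖g j‖^2 := by
    refine Finset.sum_le_sum fun j hj => ?_
    have hc := cF_bound k m hk hm j ((hSfmem j).mp hj)
    rw [← hn] at hc
    rw [norm_mul, mul_pow]
    have h0 : (0:ℝ) ≤ ‖g j‖ := norm_nonneg _
    have h0' : (0:ℝ) ≤ ‖cF n j‖ := norm_nonneg _
    have hcc : ‖cF n j‖^2 ≤ (((2:ℝ)^m)⁻¹)^2 := pow_le_pow_left₀ h0' hc 2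
    nlinarith [sq_nonneg (‖g j‖)]
  have hsq : ‖(W ^ n : H ≃L[ℂ] H) y‖^2 ≤ (((2:ℝ)^m)⁻¹ * ‖y‖)^2 := by
    rw [mul_pow, hnW, hny, Finset.mul_sum]
    exact hbound
  have hA : (0:ℝ) ≤ ‖(W ^ n : H ≃L[ℂ] H) y‖ := norm_nonneg _
  have hB : (0:ℝ) ≤ ((2:ℝ)^m)⁻¹ * ‖y‖ := by positivity
  nlinarith

/-- for the weighted shift `W`, `‖W^{2k-1+m} P_{2k}‖ = 1/2^m`. -/
theorem stmt9 (b : HilbertBasis ℕ+ ℂ H) (W : H ≃L[ℂ] H)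
    (h1 : ∀ j : ℕ+, Odd (j : ℕ) → W (b j) = ((1 : ℂ) / 2) • b (j + 2))
    (h2 : ∀ j : ℕ+, Even (j : ℕ) → 2 < j → W (b j) = (2 : ℂ) • b (j - 2))
    (h3 : W (b 2) = b 1) :
    ∀ k m : ℕ, 1 ≤ k → 1 ≤ m →
      ‖((W ^ (2 * k - 1 + m) : H ≃L[ℂ] H) : H →L[ℂ] H) ∘L PprojP b (2 * k)‖
        = 1 / 2 ^ m := by
  intro k m hk hm
  set n := 2 * k - 1 + m with hn
  set K := LspanP b (2*k) with hK
  letI : FiniteDimensional ℂ K := LspanP_fd b (2*k)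
  letI : CompleteSpace K := FiniteDimensional.complete ℂ K
  have hPapp : ∀ x : H, PprojP b (2*k) x = ((K.orthogonalProjection x : K) : H) :=
    fun x => rfl
  have hbn : ∀ t : ℕ+, ‖b t‖ = 1 := b.orthonormal.1
  apply le_antisymm
  · apply ContinuousLinearMap.opNorm_le_bound _ (by positivity)
    intro x
    rw [ContinuousLinearMap.comp_apply]
    have hmem : PprojP b (2*k) x ∈ K := by rw [hPapp]; exact SetLike.coe_mem _
    have hP : ‖PprojP b (2*k) x‖ ≤ ‖x‖ := by
      rw [hPapp]
      calc ‖((K.orthogonalProjection x : K) : H)‖ = ‖K.orthogonalProjection x‖ := rfl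
        _ ≤ ‖K.orthogonalProjection‖ * ‖x‖ := (K.orthogonalProjection).le_opNorm x
        _ ≤ 1 * ‖x‖ := by
            have := Submodule.orthogonalProjectionOnto_norm_le K
            have hx : (0:ℝ) ≤ ‖x‖ := norm_nonneg x
            nlinarith
        _ = ‖x‖ := one_mul _
    calc ‖((W ^ n : H ≃L[ℂ] H) : H →L[ℂ] H) (PprojP b (2*k) x)‖
        = ‖(W ^ n : H ≃L[ℂ] H) (PprojP b (2*k) x)‖ := rfl
      _ ≤ ((2:ℝ)^m)⁻¹ * ‖PprojP b (2*k) x‖ :=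
          aux_spanbound b W h1 h2 h3 k m hk hm _ hmem
      _ ≤ ((2:ℝ)^m)⁻¹ * ‖x‖ := by
          have : (0:ℝ) ≤ ((2:ℝ)^m)⁻¹ := by positivity
          nlinarith
      _ = 1 / 2^m * ‖x‖ := by rw [one_div]
  · set j2k := pnat (2*k) (by omega) with hj2k
    have hcoe : ((j2k : ℕ+) : ℕ) = 2*k := rfl
    have ho : ¬ Odd ((j2k : ℕ+) : ℕ) := by rw [hcoe]; simp [Nat.odd_iff]
    have hval : ‖cF n j2k‖ = ((2:ℝ)^m)⁻¹ := by
      rw [cF, if_neg ho, hcoe, Nat.mul_div_cancel_left _ (by norm_num : 0 < 2)]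
      rw [norm_mul, norm_inv, norm_pow, norm_pow, RCLike.norm_two]
      rw [show n - k = (k-1) + m by omega, pow_add, mul_inv, ← mul_assoc,
        mul_inv_cancel₀ (by positivity), one_mul]
    have hmem : b j2k ∈ K := Submodule.subset_span ⟨j2k, by simp [hcoe], rfl⟩
    have hproj : PprojP b (2*k) (b j2k) = b j2k := by
      rw [hPapp]; exact K.starProjection_eq_self_iff.mpr hmem
    have hpt := aux_pointwise b W h1 h2 h3 n j2k (by rw [hcoe]; omega)
    have heval :
        ‖(((W ^ n : H ≃L[ℂ] H) : H →L[ℂ] H) ∘L PprojP b (2*k)) (b j2k)‖ = ((2:ℝ)^m)⁻¹ := by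
      rw [ContinuousLinearMap.comp_apply]
      calc ‖((W ^ n : H ≃L[ℂ] H) : H →L[ℂ] H) (PprojP b (2*k) (b j2k))‖
          = ‖(W ^ n : H ≃L[ℂ] H) (b j2k)‖ := by rw [hproj]; rfl
        _ = ‖cF n j2k • b (tauF n j2k)‖ := by rw [hpt]
        _ = ‖cF n j2k‖ * ‖b (tauF n j2k)‖ := norm_smul _ _
        _ = ((2:ℝ)^m)⁻¹ := by rw [hval, hbn, mul_one]
    have hle := (((W ^ n : H ≃L[ℂ] H) : H →L[ℂ] H) ∘L PprojP b (2*k)).le_opNorm (b j2k)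
    rw [heval, hbn, mul_one] at hle
    rw [one_div]
    exact hle


end
end

section
/- Let U, W ∈ B(H) with W invertible and U unitary, and suppose that for every finite-dimensional subspace K of H there exist strictly increasing sequences {n_j}, {m_j} ⊆ ℕ and sequences {G_j}, {D_j} of compact operators with ‖G_j − P_K‖ → 0, ‖D_j − P_K‖ → 0, ‖W^{−m_j} G_j‖ → 0, and ‖W^{n_j} D_j‖ → 0. Then m(W) < 1 < ‖W‖, where m(W) := inf_{‖x‖=1}‖W x‖. -/
set_option linter.unusedSectionVars false
set_option linter.unusedVariables false

open scoped InnerProductSpace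
open Filter

noncomputable section

variable {H : Type*} [NormedAddCommGroup H] [InnerProductSpace ℂ H] [CompleteSpace H]

theorem mop_le_apply (F : H →L[ℂ] H) {x : H} (hx : ‖x‖ = 1) : mop F ≤ ‖F x‖ :=
  ciInf_le ⟨0, fun _ ⟨y, hy⟩ => hy ▸ norm_nonneg _⟩ (⟨x, hx⟩ : {x : H // ‖x‖ = 1})

theorem norm_le_of_one_le_mop (F : H →L[ℂ] H) (h : 1 ≤ mop F) (y : H) : ‖y‖ ≤ ‖F y‖ := by
  rcases eq_or_ne y 0 with rfl | hy
  · simp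
  · have hny : ‖y‖ ≠ 0 := norm_ne_zero_iff.mpr hy
    have hx : ‖(‖y‖⁻¹ : ℂ) • y‖ = 1 := by
      simp [norm_smul, inv_mul_cancel₀ hny]
    have := (h.trans (mop_le_apply F hx))
    rw [map_smul, norm_smul] at this
    simp only [norm_inv, Complex.norm_real, norm_norm] at this
    calc ‖y‖ = ‖y‖ * 1 := (mul_one _).symm
    _ ≤ ‖y‖ * (‖y‖⁻¹ * ‖F y‖) := by
        exact mul_le_mul_of_nonneg_left this (norm_nonneg _)
    _ = ‖F y‖ := by field_simp

theorem norm_le_pow_of_le (F : H →L[ℂ] H) (h : ∀ y : H, ‖y‖ ≤ ‖F y‖) (n : ℕ) (y : H) :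
    ‖y‖ ≤ ‖(F ^ n) y‖ := by
  induction n generalizing y with
  | zero => simp
  | succ n ih =>
    have : (F ^ (n + 1)) y = (F ^ n) (F y) := by
      rw [pow_succ]; rfl
    rw [this]
    exact (h y).trans (ih (F y))

theorem projCLM_apply_self (K : Submodule ℂ H) (hK : FiniteDimensional ℂ K) {x : H}
    (hx : x ∈ K) : projCLM K hK x = x := by
  letI := hK
  letI : CompleteSpace K := FiniteDimensional.complete ℂ K
  have : K.orthogonalProjection x = ⟨x, hx⟩ :=
    Submodule.orthogonalProjection_mem_subspace_eq_self (⟨x, hx⟩ : K)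
  simp only [projCLM, ContinuousLinearMap.comp_apply]
  rw [this]
  rfl

/-- the `0`-transitivity type condition implies `m(W) < 1 < ‖W‖`. -/
theorem stmt11 [Nontrivial H] (W : H ≃L[ℂ] H) (U : H →L[ℂ] H)
    (hU : U ∈ unitary (H →L[ℂ] H))
    (hyp : ∀ (K : Submodule ℂ H) (hK : FiniteDimensional ℂ K),
      ∃ nseq mseq : ℕ → ℕ, StrictMono nseq ∧ StrictMono mseq ∧
      ∃ G D : ℕ → H →L[ℂ] H,
        (∀ j, IsCompactOperator (G j)) ∧ (∀ j, IsCompactOperator (D j)) ∧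
        Filter.Tendsto (fun j => ‖G j - projCLM K hK‖) atTop (nhds 0) ∧
        Filter.Tendsto (fun j => ‖D j - projCLM K hK‖) atTop (nhds 0) ∧
        Filter.Tendsto (fun j => ‖((W.symm : H →L[ℂ] H) ^ mseq j) ∘L G j‖) atTop (nhds 0) ∧
        Filter.Tendsto (fun j => ‖((W : H →L[ℂ] H) ^ nseq j) ∘L D j‖) atTop (nhds 0)) :
    mop (W : H →L[ℂ] H) < 1 ∧ 1 < ‖(W : H →L[ℂ] H)‖ := by
  obtain ⟨x, hx⟩ := exists_norm_eq H zero_le_one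
  set K : Submodule ℂ H := Submodule.span ℂ {x} with hKdef
  have hK : FiniteDimensional ℂ K := FiniteDimensional.span_of_finite ℂ (Set.finite_singleton x)
  have hxK : x ∈ K := Submodule.mem_span_singleton_self x
  obtain ⟨nseq, mseq, _, _, G, D, _, _, hG, hD, hWG, hWD⟩ := hyp K hK
  have hPx : projCLM K hK x = x := projCLM_apply_self K hK hxK
  have key : ∀ (E : ℕ → H →L[ℂ] H),
      Tendsto (fun j => ‖E j - projCLM K hK‖) atTop (nhds 0) →
      Tendsto (fun j => ‖E j x‖) atTop (nhds 1) := by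
    intro E hE
    have h0 : Tendsto (fun j => ‖E j x - x‖) atTop (nhds 0) := by
      refine squeeze_zero (fun j => norm_nonneg _) (fun j => ?_) hE
      have h1 : E j x - x = (E j - projCLM K hK) x := by simp [hPx]
      rw [h1]
      calc ‖(E j - projCLM K hK) x‖ ≤ ‖E j - projCLM K hK‖ * ‖x‖ :=
            (E j - projCLM K hK).le_opNorm x
      _ = ‖E j - projCLM K hK‖ := by rw [hx, mul_one]
    have h2 : Tendsto (fun j => E j x) atTop (nhds x) :=
      tendsto_iff_norm_sub_tendsto_zero.mpr h0
    have h3 := (continuous_norm.tendsto x).comp h2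
    rwa [hx] at h3
  constructor
  · by_contra hlt
    push_neg at hlt
    have hmono : ∀ y : H, ‖y‖ ≤ ‖(W : H →L[ℂ] H) y‖ :=
      norm_le_of_one_le_mop _ hlt
    have hle : ∀ j, ‖D j x‖ ≤ ‖((W : H →L[ℂ] H) ^ nseq j) ∘L D j‖ := by
      intro j
      calc ‖D j x‖ ≤ ‖((W : H →L[ℂ] H) ^ nseq j) (D j x)‖ :=
            norm_le_pow_of_le _ hmono _ _
      _ = ‖(((W : H →L[ℂ] H) ^ nseq j) ∘L D j) x‖ := rfl
      _ ≤ ‖((W : H →L[ℂ] H) ^ nseq j) ∘L D j‖ * ‖x‖ :=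
            ContinuousLinearMap.le_opNorm _ x
      _ = ‖((W : H →L[ℂ] H) ^ nseq j) ∘L D j‖ := by rw [hx, mul_one]
    have : (1 : ℝ) ≤ 0 := le_of_tendsto_of_tendsto' (key D hD) hWD hle
    linarith
  · by_contra hlt
    push_neg at hlt
    have hmono : ∀ y : H, ‖y‖ ≤ ‖(W.symm : H →L[ℂ] H) y‖ := by
      intro y
      calc ‖y‖ = ‖(W : H →L[ℂ] H) ((W.symm : H →L[ℂ] H) y)‖ := by
            simp
      _ ≤ ‖(W : H →L[ℂ] H)‖ * ‖(W.symm : H →L[ℂ] H) y‖ :=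
            ContinuousLinearMap.le_opNorm _ _
      _ ≤ 1 * ‖(W.symm : H →L[ℂ] H) y‖ :=
            mul_le_mul_of_nonneg_right hlt (norm_nonneg _)
      _ = ‖(W.symm : H →L[ℂ] H) y‖ := one_mul _
    have hle : ∀ j, ‖G j x‖ ≤ ‖((W.symm : H →L[ℂ] H) ^ mseq j) ∘L G j‖ := by
      intro j
      calc ‖G j x‖ ≤ ‖((W.symm : H →L[ℂ] H) ^ mseq j) (G j x)‖ :=
            norm_le_pow_of_le _ hmono _ _
      _ = ‖(((W.symm : H →L[ℂ] H) ^ mseq j) ∘L G j) x‖ := rfl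
      _ ≤ ‖((W.symm : H →L[ℂ] H) ^ mseq j) ∘L G j‖ * ‖x‖ :=
            ContinuousLinearMap.le_opNorm _ x
      _ = ‖((W.symm : H →L[ℂ] H) ^ mseq j) ∘L G j‖ := by rw [hx, mul_one]
    have : (1 : ℝ) ≤ 0 := le_of_tendsto_of_tendsto' (key G hG) hWG hle
    linarith

end
end

section
/- Let U, W ∈ B(H) with W invertible and U unitary, and suppose there exist a nonzero finite-dimensional subspace K of H and N ∈ ℕ such that U^n(K) ⊥ K for all n ≥ N. If the orthogonal projection P_K lies in the norm-closure (in B_0(H)) of the set of periodic elements of the sequence {S_{U,W}^n}, then ‖W‖ > 1. -/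
set_option linter.unusedSectionVars false
set_option linter.unusedVariables false

open scoped InnerProductSpace
open Filter Topology

noncomputable section

variable {H : Type*} [NormedAddCommGroup H] [InnerProductSpace ℂ H] [CompleteSpace H]

lemma aux_pow_mul_pow {M : Type*} [Monoid M] {a b : M} (h1 : a * b = 1) (m : ℕ) :
    a ^ m * b ^ m = 1 := by
  induction m with
  | zero => simp
  | succ n ih => rw [pow_succ a, pow_succ' b, mul_assoc, ← mul_assoc a, h1, one_mul, ih]

lemma aux_inner_pow {U : H →L[ℂ] H} (hU : U ∈ unitary (H →L[ℂ] H)) (a b : ℕ) (x y : H) :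
    ⟪(U ^ (b + a)) x, (U ^ b) y⟫_ℂ = ⟪(U ^ a) x, y⟫_ℂ := by
  have h1 : star U * U = 1 := hU.1
  have hs : (star U) ^ b * U ^ b = 1 := aux_pow_mul_pow h1 b
  have key : star (U ^ b) * U ^ (b + a) = U ^ a := by
    rw [star_pow, pow_add, ← mul_assoc, hs, one_mul]
  calc ⟪(U ^ (b + a)) x, (U ^ b) y⟫_ℂ
      = ⟪(ContinuousLinearMap.adjoint (U ^ b)) ((U ^ (b + a)) x), y⟫_ℂ := by
        rw [ContinuousLinearMap.adjoint_inner_left]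
    _ = ⟪(star (U ^ b) * U ^ (b + a)) x, y⟫_ℂ := by
        rw [ContinuousLinearMap.star_eq_adjoint]; rfl
    _ = ⟪(U ^ a) x, y⟫_ℂ := by rw [key]


/-- if `P_K` lies in the closure of the periodic elements of `{S^n}`,
then `‖W‖ > 1`. -/
theorem stmt12 (W : H ≃L[ℂ] H) (U : H →L[ℂ] H) (hU : U ∈ unitary (H →L[ℂ] H))
    (K : Submodule ℂ H) (hK : FiniteDimensional ℂ K) (hKne : K ≠ ⊥) (N : ℕ)
    (horth : ∀ n ≥ N, ∀ x ∈ K, ∀ y ∈ K, ⟪(U ^ n) x, y⟫_ℂ = 0)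
    (hP : projCLM K hK ∈ closure {F : H →L[ℂ] H | IsCompactOperator F ∧
      ∃ N' : ℕ, 0 < N' ∧ ∀ k : ℕ, Spow W U (k * N') F = F}) :
    1 < ‖(W : H →L[ℂ] H)‖ := by
  by_contra hlt
  push_neg at hlt
  -- unit vector in K
  obtain ⟨v, hvK, hvne⟩ := (Submodule.ne_bot_iff K).mp hKne
  set x : H := ‖v‖⁻¹ • v with hxdef
  have hxK : x ∈ K := K.smul_mem _ hvK
  have hx1 : ‖x‖ = 1 := by
    rw [hxdef, norm_smul, norm_inv, norm_norm, inv_mul_cancel₀ (norm_ne_zero_iff.mpr hvne)]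
  -- P x = x
  have hPx : projCLM K hK x = x := by
    show (K.subtypeL ((K.orthogonalProjection) x) : H) = x
    exact K.starProjection_eq_self_iff.mpr hxK
  -- find F
  rw [Metric.mem_closure_iff] at hP
  obtain ⟨F, ⟨hFc, N', hN', hper⟩, hdist⟩ := hP (1/2) (by norm_num)
  rw [dist_eq_norm] at hdist
  -- 1/2 ≤ ‖F x‖
  have hPxinner : ⟪x, projCLM K hK x⟫_ℂ = 1 := by
    rw [hPx, inner_self_eq_norm_sq_to_K, hx1]; norm_num
  have hdiff : ‖⟪x, projCLM K hK x⟫_ℂ - ⟪x, F x⟫_ℂ‖ < 1/2 := by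
    rw [← inner_sub_right]
    calc ‖⟪x, projCLM K hK x - F x⟫_ℂ‖ ≤ ‖x‖ * ‖projCLM K hK x - F x‖ := norm_inner_le_norm _ _
      _ = ‖(projCLM K hK - F) x‖ := by rw [hx1, one_mul]; rfl
      _ ≤ ‖projCLM K hK - F‖ * ‖x‖ := (projCLM K hK - F).le_opNorm x
      _ = ‖projCLM K hK - F‖ := by rw [hx1, mul_one]
      _ < 1/2 := hdist
  have hFxinner : (1:ℝ)/2 ≤ ‖⟪x, F x⟫_ℂ‖ := by
    have h1 : ‖⟪x, projCLM K hK x⟫_ℂ‖ = 1 := by rw [hPxinner]; simp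
    have := norm_sub_norm_le (⟪x, projCLM K hK x⟫_ℂ) (⟪x, F x⟫_ℂ)
    rw [h1] at this
    linarith
  have hFx : (1:ℝ)/2 ≤ ‖F x‖ := by
    refine le_trans hFxinner ?_
    calc ‖⟪x, F x⟫_ℂ‖ ≤ ‖x‖ * ‖F x‖ := norm_inner_le_norm _ _
      _ = ‖F x‖ := by rw [hx1, one_mul]
  -- the sequence
  set c : ℕ → ℕ := fun j => j * ((N + 1) * N') with hcdef
  set z : ℕ → H := fun j => (U ^ (c j)) x with hzdef
  -- operator identities
  have hWs : ∀ m : ℕ, ((W : H →L[ℂ] H)) ^ m * ((W.symm : H →L[ℂ] H)) ^ m = 1 := by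
    intro m
    apply aux_pow_mul_pow
    ext w
    simp [ContinuousLinearMap.mul_apply]
  have hUs : ∀ m : ℕ, ((star U) ^ m) * (U ^ m) = 1 := fun m => aux_pow_mul_pow hU.1 m
  -- lower bound for ‖F (z j)‖
  have hWnorm : ∀ m : ℕ, ‖((W : H →L[ℂ] H)) ^ m‖ ≤ 1 := by
    intro m
    rcases Nat.eq_zero_or_pos m with h | h
    · subst h; rw [pow_zero]; exact ContinuousLinearMap.norm_id_le
    · exact le_trans (norm_pow_le' _ h) (pow_le_one₀ (norm_nonneg _) hlt)
  have hFz : ∀ j : ℕ, (1:ℝ)/2 ≤ ‖F (z j)‖ := by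
    intro j
    have hp := hper (j * (N + 1))
    have hcm : j * (N + 1) * N' = c j := by rw [hcdef]; ring
    rw [hcm] at hp
    have h1 : ((W.symm : H →L[ℂ] H) ^ (c j)) (F x) = F (z j) := by
      have := congrArg (fun A : H →L[ℂ] H => A (z j)) hp
      simp only [Spow, ContinuousLinearMap.comp_apply] at this
      have h2 : ((star U) ^ (c j)) (z j) = x := by
        rw [hzdef]
        show (((star U) ^ (c j)) * (U ^ (c j))) x = x
        rw [hUs]; rfl
      rwa [h2] at this
    have h3 : F x = (((W : H →L[ℂ] H)) ^ (c j)) (F (z j)) := by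
      rw [← h1]
      show F x = ((((W : H →L[ℂ] H)) ^ (c j)) * (((W.symm : H →L[ℂ] H)) ^ (c j))) (F x)
      rw [hWs]; rfl
    calc (1:ℝ)/2 ≤ ‖F x‖ := hFx
      _ = ‖(((W : H →L[ℂ] H)) ^ (c j)) (F (z j))‖ := by rw [h3]
      _ ≤ ‖((W : H →L[ℂ] H)) ^ (c j)‖ * ‖F (z j)‖ := ContinuousLinearMap.le_opNorm _ _
      _ ≤ 1 * ‖F (z j)‖ := by
          exact mul_le_mul_of_nonneg_right (hWnorm _) (norm_nonneg _)
      _ = ‖F (z j)‖ := one_mul _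
  -- orthonormality
  have horthz : ∀ i j : ℕ, j < i → ⟪z i, z j⟫_ℂ = 0 := by
    intro i j hij
    have hcij : c i = c j + (c i - c j) := by
      have : c j ≤ c i := Nat.mul_le_mul_right _ (le_of_lt hij)
      omega
    have : ⟪z i, z j⟫_ℂ = ⟪(U ^ (c i - c j)) x, x⟫_ℂ := by
      show ⟪(U ^ (c i)) x, (U ^ (c j)) x⟫_ℂ = _
      conv_lhs => rw [hcij]
      exact aux_inner_pow hU (c i - c j) (c j) x x
    rw [this]
    apply horth _ _ _ hxK _ hxK
    have h1 : (N + 1) * N' ≤ c i - c j := by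
      have : c i - c j = (i - j) * ((N + 1) * N') := by
        rw [hcdef]; simp only; rw [← Nat.sub_mul]
      rw [this]
      have hij1 : 1 ≤ i - j := by omega
      calc (N + 1) * N' = 1 * ((N + 1) * N') := (one_mul _).symm
        _ ≤ (i - j) * ((N + 1) * N') := Nat.mul_le_mul_right _ hij1
    have h2 : N ≤ (N + 1) * N' := by
      calc N ≤ N + 1 := Nat.le_succ N
        _ = (N + 1) * 1 := (mul_one _).symm
        _ ≤ (N + 1) * N' := Nat.mul_le_mul_left _ hN'
    omega
  have hz_on : Orthonormal ℂ z := by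
    rw [orthonormal_iff_ite]
    intro i j
    rcases lt_trichotomy i j with h | h | h
    · rw [if_neg (Nat.ne_of_lt h)]
      rw [← inner_conj_symm, horthz j i h, map_zero]
    · subst h
      rw [if_pos rfl]
      have : ⟪z i, z i⟫_ℂ = ⟪(U ^ 0) x, x⟫_ℂ := by
        show ⟪(U ^ (c i)) x, (U ^ (c i)) x⟫_ℂ = _
        rw [show c i = c i + 0 from rfl]
        exact aux_inner_pow hU 0 (c i) x x
      rw [this, pow_zero, ContinuousLinearMap.one_apply, inner_self_eq_norm_sq_to_K, hx1]
      norm_num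
    · rw [if_neg (Nat.ne_of_gt h)]
      exact horthz i j h
  -- weak convergence
  have hweak : ∀ w : H, Tendsto (fun j => ‖⟪z j, w⟫_ℂ‖) atTop (𝓝 0) := by
    intro w
    have hsum := hz_on.inner_products_summable (x := w)
    have h2 := hsum.tendsto_atTop_zero
    have h3 := (Real.continuous_sqrt.tendsto 0).comp h2
    simp only [Function.comp_def, Real.sqrt_zero] at h3
    convert h3 using 2 with j
    rw [Real.sqrt_sq (norm_nonneg _)]
  -- norm of z j
  have hznorm : ∀ j, ‖z j‖ = 1 := by
    intro j
    have : ⟪z j, z j⟫_ℂ = 1 := by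
      have := orthonormal_iff_ite.mp hz_on j j
      rwa [if_pos rfl] at this
    rw [inner_self_eq_norm_sq_to_K] at this
    have h3 : (‖z j‖ : ℝ) ^ 2 = 1 := by
      have h4 : ((‖z j‖ ^ 2 : ℝ) : ℂ) = ((1 : ℝ) : ℂ) := by push_cast; simpa using this
      exact_mod_cast h4
    nlinarith [norm_nonneg (z j)]
  -- compactness
  have hCc : IsCompact (closure (F '' Metric.closedBall 0 1)) :=
    hFc.isCompact_closure_image_closedBall (𝕜₁ := ℂ) (f := (F : H →ₗ[ℂ] H)) 1
  have hzmem : ∀ j, F (z j) ∈ closure (F '' Metric.closedBall 0 1) := by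
    intro j
    apply subset_closure
    exact ⟨z j, by simp [Metric.mem_closedBall, dist_zero_right, hznorm j], rfl⟩
  obtain ⟨a, haC, φ, hφ, hconv⟩ := hCc.tendsto_subseq hzmem
  -- ‖a‖ ≥ 1/2
  have hanorm : (1:ℝ)/2 ≤ ‖a‖ := by
    have h1 : Tendsto (fun n => ‖F (z (φ n))‖) atTop (𝓝 ‖a‖) :=
      (continuous_norm.tendsto a).comp hconv
    exact ge_of_tendsto h1 (Eventually.of_forall fun n => hFz (φ n))
  -- inner converges to ⟪a,a⟫
  have h1 : Tendsto (fun n => ⟪a, F (z (φ n))⟫_ℂ) atTop (𝓝 ⟪a, a⟫_ℂ) :=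
    tendsto_const_nhds.inner hconv
  -- but also to 0
  have h2 : Tendsto (fun n => ‖⟪a, F (z (φ n))⟫_ℂ‖) atTop (𝓝 0) := by
    have key : ∀ j, ‖⟪a, F (z j)⟫_ℂ‖ = ‖⟪z j, (ContinuousLinearMap.adjoint F) a⟫_ℂ‖ := by
      intro j
      rw [← ContinuousLinearMap.adjoint_inner_left, ← inner_conj_symm, RCLike.norm_conj]
    simp only [key]
    exact (hweak _).comp (hφ.tendsto_atTop)
  have h3 : Tendsto (fun n => ‖⟪a, F (z (φ n))⟫_ℂ‖) atTop (𝓝 ‖⟪a, a⟫_ℂ‖) :=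
    (continuous_norm.tendsto _).comp h1
  have h4 : ‖⟪a, a⟫_ℂ‖ = 0 := tendsto_nhds_unique h3 h2
  have h5 : a = 0 := by
    rw [norm_eq_zero] at h4
    exact inner_self_eq_zero.mp h4
  rw [h5, norm_zero] at hanorm
  linarith


end
end

section
/- Let U, W ∈ B(H) with W invertible and U unitary, and suppose there exist a nonzero closed subspace K and N ∈ ℕ with U^n(K) ⊥ K for all n ≥ N. If m(W) > 1, then the set of periodic elements of the cosine sequence {C^{(n)}_{U,W}} is not dense in B_0(H); in particular {C^{(n)}_{U,W}} is not chaotic on B_0(H). -/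
set_option linter.unusedSectionVars false
set_option linter.unusedVariables false

open scoped InnerProductSpace
open Filter

noncomputable section

variable {H : Type*} [NormedAddCommGroup H] [InnerProductSpace ℂ H] [CompleteSpace H]

section Aux

variable {H : Type*} [NormedAddCommGroup H] [InnerProductSpace ℂ H] [CompleteSpace H]

lemma mop_le (W : H →L[ℂ] H) {x : H} (hx : ‖x‖ = 1) : mop W ≤ ‖W x‖ := by
  have hbdd : BddBelow (Set.range fun x : {x : H // ‖x‖ = 1} => ‖W x‖) :=
    ⟨0, by rintro r ⟨y, rfl⟩; exact norm_nonneg _⟩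
  exact ciInf_le hbdd (⟨x, hx⟩ : {x : H // ‖x‖ = 1})

lemma mop_mul_le (W : H →L[ℂ] H) (x : H) : mop W * ‖x‖ ≤ ‖W x‖ := by
  rcases eq_or_ne x 0 with rfl | hx
  · simp
  · have hnx : (0 : ℝ) < ‖x‖ := norm_pos_iff.mpr hx
    have hu : ‖(‖x‖⁻¹ : ℂ) • x‖ = 1 := by
      rw [norm_smul]
      simp [hnx.ne']
    have := mop_le W hu
    have h2 : ‖W ((‖x‖⁻¹ : ℂ) • x)‖ = ‖x‖⁻¹ * ‖W x‖ := by
      rw [map_smul, norm_smul]; simp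
    rw [h2] at this
    have := mul_le_mul_of_nonneg_right this hnx.le
    calc mop W * ‖x‖ ≤ ‖x‖⁻¹ * ‖W x‖ * ‖x‖ := this
      _ = ‖W x‖ := by field_simp

lemma mop_pow_le (W : H →L[ℂ] H) (n : ℕ) (x : H) :
    (mop W) ^ n * ‖x‖ ≤ ‖(W ^ n) x‖ ∨ mop W < 0 := by
  rcases lt_or_ge (mop W) 0 with h | h
  · exact Or.inr h
  left
  induction n with
  | zero => simp
  | succ n ih =>
    have h1 : (W ^ (n + 1)) x = W ((W ^ n) x) := by
      rw [pow_succ']; rfl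
    rw [h1, pow_succ]
    calc mop W ^ n * mop W * ‖x‖ = mop W * (mop W ^ n * ‖x‖) := by ring
      _ ≤ mop W * ‖(W ^ n) x‖ := by
          exact mul_le_mul_of_nonneg_left ih h
      _ ≤ ‖W ((W ^ n) x)‖ := mop_mul_le W _

end Aux

/-- if `m(W) > 1` then the periodic elements of `{C^{(n)}}` are not
dense in `B₀(H)` (so `{C^{(n)}}` is not chaotic). -/
theorem stmt16 (W : H ≃L[ℂ] H) (U : H →L[ℂ] H) (hU : U ∈ unitary (H →L[ℂ] H))
    (K : Submodule ℂ H) (hKc : IsClosed (K : Set H)) (hKne : K ≠ ⊥) (N : ℕ)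
    (horth : ∀ n ≥ N, ∀ x ∈ K, ∀ y ∈ K, ⟪(U ^ n) x, y⟫_ℂ = 0)
    (hm : 1 < mop (W : H →L[ℂ] H)) :
    ¬ (∀ F : H →L[ℂ] H, IsCompactOperator F → ∀ ε > (0 : ℝ),
        ∃ G : H →L[ℂ] H, IsCompactOperator G ∧
          (∃ N' : ℕ, 0 < N' ∧ ∀ k : ℕ, Cpow W U (k * N') G = G) ∧ ‖F - G‖ < ε) := by
  intro hdense
  set m := mop (W : H →L[ℂ] H) with hmdef
  have hm0 : (0 : ℝ) < m := lt_trans one_pos hm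
  -- basic norm bounds
  have hWpow : ∀ (n : ℕ) (x : H), m ^ n * ‖x‖ ≤ ‖((W : H →L[ℂ] H) ^ n) x‖ := by
    intro n x
    rcases mop_pow_le (W : H →L[ℂ] H) n x with h | h
    · exact h
    · exact absurd h (not_lt.mpr hm0.le)
  have hWsymm : ∀ x : H, ‖(W.symm : H →L[ℂ] H) x‖ ≤ m⁻¹ * ‖x‖ := by
    intro x
    have := mop_mul_le (W : H →L[ℂ] H) ((W.symm : H →L[ℂ] H) x)
    have h2 : (W : H →L[ℂ] H) ((W.symm : H →L[ℂ] H) x) = x := W.apply_symm_apply x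
    rw [h2] at this
    have h3 : ‖(W.symm : H →L[ℂ] H) x‖ ≤ ‖x‖ / m := (le_div_iff₀' hm0).mpr this
    calc ‖(W.symm : H →L[ℂ] H) x‖ ≤ ‖x‖ / m := h3
      _ = m⁻¹ * ‖x‖ := by ring
  have hWsymmpow : ∀ (n : ℕ) (x : H), ‖((W.symm : H →L[ℂ] H) ^ n) x‖ ≤ (m⁻¹) ^ n * ‖x‖ := by
    intro n
    induction n with
    | zero => simp
    | succ n ih =>
      intro x
      have h1 : ((W.symm : H →L[ℂ] H) ^ (n + 1)) x
          = (W.symm : H →L[ℂ] H) (((W.symm : H →L[ℂ] H) ^ n) x) := by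
        rw [pow_succ']; rfl
      rw [h1, pow_succ]
      calc ‖(W.symm : H →L[ℂ] H) (((W.symm : H →L[ℂ] H) ^ n) x)‖
          ≤ m⁻¹ * ‖((W.symm : H →L[ℂ] H) ^ n) x‖ := hWsymm _
        _ ≤ m⁻¹ * ((m⁻¹) ^ n * ‖x‖) := by
            exact mul_le_mul_of_nonneg_left (ih x) (inv_nonneg.mpr hm0.le)
        _ = (m⁻¹) ^ n * m⁻¹ * ‖x‖ := by ring
  -- unitary facts
  have hUn : ∀ n : ℕ, (U ^ n) ∈ unitary (H →L[ℂ] H) := fun n => pow_mem hU n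
  have hUstar : star U ∈ unitary (H →L[ℂ] H) := Unitary.star_mem hU
  have hUstarn : ∀ n : ℕ, ((star U) ^ n) ∈ unitary (H →L[ℂ] H) := fun n => pow_mem hUstar n
  have hnormUstar : ∀ (n : ℕ) (x : H), ‖((star U) ^ n) x‖ = ‖x‖ := fun n x =>
    ContinuousLinearMap.norm_map_of_mem_unitary (hUstarn n) x
  have hUUstar : ∀ n : ℕ, (U ^ n) * ((star U) ^ n) = 1 := by
    intro n
    have hc : Commute U (star U) := by
      have h1 : U * star U = 1 := (Unitary.mem_iff.mp hU).2
      have h2 : star U * U = 1 := (Unitary.mem_iff.mp hU).1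
      unfold Commute SemiconjBy
      rw [h1, h2]
    rw [← hc.mul_pow, (Unitary.mem_iff.mp hU).2, one_pow]
  have hUUstar' : ∀ (n : ℕ) (x : H), (U ^ n) (((star U) ^ n) x) = x := by
    intro n x
    have := congrArg (fun (A : H →L[ℂ] H) => A x) (hUUstar n)
    simpa using this
  -- choose a unit vector in K
  obtain ⟨x, hxK, hx0⟩ := Submodule.exists_mem_ne_zero_of_ne_bot hKne
  have hnx : (0 : ℝ) < ‖x‖ := norm_pos_iff.mpr hx0
  set e : H := (‖x‖⁻¹ : ℂ) • x with he
  have hne : ‖e‖ = 1 := by rw [he, norm_smul]; simp [hnx.ne']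
  -- rank-one operator F y = ⟪e, y⟫ • e
  set F : H →L[ℂ] H := (innerSL ℂ e).smulRight e with hFdef
  have hFapp : ∀ y : H, F y = (⟪e, y⟫_ℂ) • e := fun y => rfl
  have hFc : IsCompactOperator F := by
    refine ⟨(fun c : ℂ => c • e) '' Metric.closedBall 0 1, ?_, ?_⟩
    · exact ((isCompact_closedBall 0 1).image (by continuity))
    · refine Filter.mem_of_superset (Metric.ball_mem_nhds 0 one_pos) ?_
      intro y hy
      refine ⟨⟪e, y⟫_ℂ, ?_, rfl⟩
      simp only [Metric.mem_closedBall, dist_zero_right]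
      calc ‖⟪e, y⟫_ℂ‖ ≤ ‖e‖ * ‖y‖ := norm_inner_le_norm e y
        _ ≤ 1 := by
            rw [hne, one_mul]
            exact le_of_lt (by simpa using hy)
  obtain ⟨G, hGc, ⟨N', hN', hper⟩, hlt⟩ := hdense F hFc (1/2) (by norm_num)
  -- norm estimates on T and S
  have hS : ∀ n : ℕ, ‖Spow W U n G‖ ≤ (m⁻¹) ^ n * ‖G‖ := by
    intro n
    refine ContinuousLinearMap.opNorm_le_bound _
      (mul_nonneg (pow_nonneg (inv_nonneg.mpr hm0.le) n) (norm_nonneg G)) ?_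
    intro y
    have h1 : (Spow W U n G) y = ((W.symm : H →L[ℂ] H) ^ n) (G (((star U) ^ n) y)) := rfl
    rw [h1]
    calc ‖((W.symm : H →L[ℂ] H) ^ n) (G (((star U) ^ n) y))‖
        ≤ (m⁻¹) ^ n * ‖G (((star U) ^ n) y)‖ := hWsymmpow n _
      _ ≤ (m⁻¹) ^ n * (‖G‖ * ‖((star U) ^ n) y‖) := by
          exact mul_le_mul_of_nonneg_left (G.le_opNorm _)
            (pow_nonneg (inv_nonneg.mpr hm0.le) n)
      _ = (m⁻¹) ^ n * ‖G‖ * ‖y‖ := by rw [hnormUstar]; ring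
  have hT : ∀ n : ℕ, m ^ n * ‖G‖ ≤ ‖Tpow W U n G‖ := by
    intro n
    have key : ‖G‖ ≤ (m⁻¹) ^ n * ‖Tpow W U n G‖ := by
      refine ContinuousLinearMap.opNorm_le_bound _
        (mul_nonneg (pow_nonneg (inv_nonneg.mpr hm0.le) n) (norm_nonneg _)) ?_
      intro y
      have h1 : (Tpow W U n G) (((star U) ^ n) y)
          = ((W : H →L[ℂ] H) ^ n) (G ((U ^ n) (((star U) ^ n) y))) := rfl
      have h2 : m ^ n * ‖G y‖ ≤ ‖(Tpow W U n G) (((star U) ^ n) y)‖ := by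
        rw [h1, hUUstar' n y]
        exact hWpow n (G y)
      have h3 : ‖(Tpow W U n G) (((star U) ^ n) y)‖ ≤ ‖Tpow W U n G‖ * ‖y‖ := by
        calc ‖(Tpow W U n G) (((star U) ^ n) y)‖
            ≤ ‖Tpow W U n G‖ * ‖((star U) ^ n) y‖ := (Tpow W U n G).le_opNorm _
          _ = ‖Tpow W U n G‖ * ‖y‖ := by rw [hnormUstar]
      have h4 : m ^ n * ‖G y‖ ≤ ‖Tpow W U n G‖ * ‖y‖ := le_trans h2 h3
      have hmn : (0 : ℝ) < m ^ n := pow_pos hm0 n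
      calc ‖G y‖ = (m ^ n)⁻¹ * (m ^ n * ‖G y‖) := by field_simp
        _ ≤ (m ^ n)⁻¹ * (‖Tpow W U n G‖ * ‖y‖) := by
            exact mul_le_mul_of_nonneg_left h4 (inv_nonneg.mpr hmn.le)
        _ = (m⁻¹) ^ n * ‖Tpow W U n G‖ * ‖y‖ := by rw [inv_pow]; ring
    have hmn : (0 : ℝ) < m ^ n := pow_pos hm0 n
    have := mul_le_mul_of_nonneg_left key hmn.le
    calc m ^ n * ‖G‖ ≤ m ^ n * ((m⁻¹) ^ n * ‖Tpow W U n G‖) := this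
      _ = ‖Tpow W U n G‖ := by
          rw [inv_pow, ← mul_assoc, mul_inv_cancel₀ hmn.ne']
          ring
  -- periodicity forces G = 0
  have hG0 : G = 0 := by
    by_contra hG
    have hnG : (0 : ℝ) < ‖G‖ := norm_pos_iff.mpr hG
    have hbound : ∀ k : ℕ, m ^ (k * N') * ‖G‖ ≤ 3 * ‖G‖ := by
      intro k
      have hperk := hper k
      have hTS : Tpow W U (k * N') G = (2 : ℂ) • G - Spow W U (k * N') G := by
        have h1 : (2 : ℂ) • Cpow W U (k * N') G
            = Tpow W U (k * N') G + Spow W U (k * N') G := by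
          simp only [Cpow, smul_smul]
          norm_num
        rw [hperk] at h1
        rw [eq_sub_iff_add_eq]
        exact h1.symm
      have hminv : (m⁻¹) ^ (k * N') ≤ 1 := by
        apply pow_le_one₀ (inv_nonneg.mpr hm0.le)
        exact inv_le_one_of_one_le₀ hm.le
      calc m ^ (k * N') * ‖G‖ ≤ ‖Tpow W U (k * N') G‖ := hT _
        _ = ‖(2 : ℂ) • G - Spow W U (k * N') G‖ := by rw [hTS]
        _ ≤ ‖(2 : ℂ) • G‖ + ‖Spow W U (k * N') G‖ := norm_sub_le _ _
        _ ≤ 2 * ‖G‖ + (m⁻¹) ^ (k * N') * ‖G‖ := by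
            have h2 : ‖(2 : ℂ) • G‖ = 2 * ‖G‖ := by
              rw [norm_smul]; norm_num
            rw [h2]
            exact add_le_add_right (hS _) _
        _ ≤ 2 * ‖G‖ + 1 * ‖G‖ :=
            add_le_add_right (mul_le_mul_of_nonneg_right hminv (norm_nonneg G)) _
        _ = 3 * ‖G‖ := by ring
    have hpow : ∀ k : ℕ, m ^ (k * N') ≤ 3 := by
      intro k
      have := hbound k
      exact le_of_mul_le_mul_right (by linarith) hnG
    have htend : Filter.Tendsto (fun k : ℕ => (m ^ N') ^ k) Filter.atTop Filter.atTop := by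
      apply tendsto_pow_atTop_atTop_of_one_lt
      exact one_lt_pow₀ hm hN'.ne'
    obtain ⟨k, hk⟩ := (htend.eventually_gt_atTop 3).exists
    have := hpow k
    rw [mul_comm, pow_mul] at this
    linarith
  -- contradiction with ‖F - G‖ < 1/2
  rw [hG0, sub_zero] at hlt
  have hF1 : (1 : ℝ) ≤ ‖F‖ := by
    have h1 : F e = e := by
      rw [hFapp, inner_self_eq_norm_sq_to_K, hne]
      norm_num
    have := F.le_opNorm e
    rw [h1, hne, mul_one] at this
    exact this
  linarith

end
end
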